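/- Let E : ℝ → ℝ be smooth and positive and let l, n : ℝ² → ℝ⁴ be smooth maps with ⟨l,l⟩ = 1, ⟨l_u,l_u⟩ = ⟨l_v,l_v⟩ = E(u), ⟨l_u,l_v⟩ = 0, ⟨n,n⟩ = 1, ⟨n,l⟩ = ⟨n,l_u⟩ = ⟨n,l_v⟩ = 0, satisfying the derivative formulas of a generalized torus of second type: l_{uu} = (E'/2E)·l_u − E·l + n, l_{uv} = (E'/2E)·l_v, l_{vv} = −(E'/2E)·l_u − E·l − n, n_u = −(1/E)·l_u, n_v = (1/E)·l_v. Then for every u₀ ∈ ℝ the curve v ↦ l(u₀, v) is a circle in ℝ⁴ of radius 1/κ(u₀), where κ(u₀) = √(1 + E'(u₀)²/(4E(u₀)³) + 1/E(u₀)²); in particular κ(u₀) > 1, so these circles are not great circles, and distinct values of κ correspond to circles of distinct radii. -/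

import Mathlib

open Real
open scoped InnerProductSpace

noncomputable section

/-- ℝ⁴ with the standard Euclidean inner product. -/
abbrev E4 := EuclideanSpace ℝ (Fin 4)

/-- Partial derivative with respect to the first parameter. -/
def pu {F : Type*} [NormedAddCommGroup F] [NormedSpace ℝ F]
    (f : ℝ × ℝ → F) (p : ℝ × ℝ) : F := fderiv ℝ f p (1, 0)

/-- Partial derivative with respect to the second parameter. -/
def pv {F : Type*} [NormedAddCommGroup F] [NormedSpace ℝ F]
    (f : ℝ × ℝ → F) (p : ℝ × ℝ) : F := fderiv ℝ f p (0, 1)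

/-- A curve in `ℝ⁴` is a circle of radius `r` if its image lies in the intersection of a
2-dimensional affine subspace with the sphere `{x : ‖x − p‖ = r}` for some `p`. -/
def IsCircleOfRadius (c : ℝ → E4) (r : ℝ) : Prop :=
  ∃ (P : AffineSubspace ℝ E4) (p : E4),
    Module.finrank ℝ P.direction = 2 ∧ ∀ t, c t ∈ P ∧ ‖c t - p‖ = r

/-- The curvature `κ(u) = √(1 + E'(u)²/(4E(u)³) + 1/E(u)²)` of the `v`-parameter lines. -/
def kappa (E : ℝ → ℝ) (u : ℝ) : ℝ :=
  Real.sqrt (1 + (deriv E u) ^ 2 / (4 * (E u) ^ 3) + 1 / (E u) ^ 2)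

lemma inner_exp (X Y Z : E4) (a b c ee : ℝ)
    (hXX : ⟪X,X⟫_ℝ = 1) (hYY : ⟪Y,Y⟫_ℝ = ee) (hZZ : ⟪Z,Z⟫_ℝ = 1)
    (hXY : ⟪X,Y⟫_ℝ = 0) (hXZ : ⟪X,Z⟫_ℝ = 0) (hYZ : ⟪Y,Z⟫_ℝ = 0) :
    ⟪a•X - b•Y - c•Z, a•X - b•Y - c•Z⟫_ℝ = a^2 + b^2*ee + c^2 := by
  have hYX : ⟪Y,X⟫_ℝ = 0 := by rw [real_inner_comm]; exact hXY
  have hZX : ⟪Z,X⟫_ℝ = 0 := by rw [real_inner_comm]; exact hXZ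
  have hZY : ⟪Z,Y⟫_ℝ = 0 := by rw [real_inner_comm]; exact hYZ
  simp only [inner_sub_left, inner_sub_right, real_inner_smul_left, real_inner_smul_right,
    hXX, hYY, hZZ, hXY, hXZ, hYZ, hYX, hZX, hZY]
  ring

lemma inner_exp2 (X Y Z W : E4) (a b c : ℝ)
    (hXW : ⟪X,W⟫_ℝ = 0) (hYW : ⟪Y,W⟫_ℝ = 0) (hZW : ⟪Z,W⟫_ℝ = 0) :
    ⟪a•X - b•Y - c•Z, W⟫_ℝ = 0 := by
  simp only [inner_sub_left, real_inner_smul_left, hXW, hYW, hZW]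
  ring

lemma scalar1 (e h k β α γ : ℝ) (he : e ≠ 0) (hk : k ≠ 0)
    (hβ : β = -1/(e*k^2)) (hα : α = h*β) (hγ : γ = 1 + e*β)
    (hek2 : e*k^2 = e + h^2 + 1/e) :
    (1-γ)^2 + α^2*e + β^2 = 1/k^2 := by
  have h3 : e^2*k^2 = e^2 + h^2*e + 1 := by
    field_simp at hek2
    nlinarith [hek2]
  subst hγ hα hβ
  field_simp
  nlinarith [h3, sq_nonneg (e*k), sq_nonneg k]

lemma hasDerivAt_sec {F : Type*} [NormedAddCommGroup F] [NormedSpace ℝ F]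
    (f : ℝ × ℝ → F) (hf : Differentiable ℝ f) (u₀ v : ℝ) :
    HasDerivAt (fun t => f (u₀, t)) (pv f (u₀, v)) v := by
  have h1 : HasDerivAt (fun t : ℝ => (u₀, t)) ((0:ℝ), (1:ℝ)) v :=
    (hasDerivAt_const v u₀).prodMk (hasDerivAt_id v)
  exact (hf (u₀, v)).hasFDerivAt.comp_hasDerivAt v h1

lemma contDiff_pu (f : ℝ × ℝ → E4) (hf : ContDiff ℝ (⊤ : ℕ∞) f) :
    ContDiff ℝ (⊤ : ℕ∞) (pu f) := by
  have : pu f = (fun L : (ℝ × ℝ) →L[ℝ] E4 => L ((1:ℝ),(0:ℝ))) ∘ fderiv ℝ f := rfl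
  rw [this]
  exact (ContinuousLinearMap.apply ℝ E4 ((1:ℝ),(0:ℝ))).contDiff.comp
    (hf.fderiv_right (by exact_mod_cast le_top))

lemma contDiff_pv (f : ℝ × ℝ → E4) (hf : ContDiff ℝ (⊤ : ℕ∞) f) :
    ContDiff ℝ (⊤ : ℕ∞) (pv f) := by
  have : pv f = (fun L : (ℝ × ℝ) →L[ℝ] E4 => L ((0:ℝ),(1:ℝ))) ∘ fderiv ℝ f := rfl
  rw [this]
  exact (ContinuousLinearMap.apply ℝ E4 ((0:ℝ),(1:ℝ))).contDiff.comp
    (hf.fderiv_right (by exact_mod_cast le_top))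

lemma inner_pd_zero (f : ℝ × ℝ → E4) (hf : Differentiable ℝ f) (c : ℝ)
    (hc : ∀ p, ⟪f p, f p⟫_ℝ = c) (p : ℝ × ℝ) (y : ℝ × ℝ) :
    ⟪f p, fderiv ℝ f p y⟫_ℝ = 0 := by
  have h1 : (fun q => ⟪f q, f q⟫_ℝ) = fun _ => c := funext hc
  have h2 := fderiv_inner_apply ℝ (hf p) (hf p) y
  rw [show (fun t => ⟪f t, f t⟫_ℝ) = fun _ => c from h1] at h2
  rw [fderiv_fun_const] at h2
  simp only [ContinuousLinearMap.coe_zero, Pi.zero_apply, ContinuousLinearMap.zero_apply] at h2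
  have h3 : ⟪(fderiv ℝ f p) y, f p⟫_ℝ = ⟪f p, (fderiv ℝ f p) y⟫_ℝ := real_inner_comm _ _
  linarith [h2, h3.symm ▸ h2]


set_option maxHeartbeats 1000000
/-- for a generalized torus of second type (derivative formulas with
`E = E(u)`), each `v`-parameter line `v ↦ l(u₀,v)` is a circle of radius `1/κ(u₀)` with
`κ(u₀) = √(1 + E'(u₀)²/(4E(u₀)³) + 1/E(u₀)²) > 1` (so the circles are not great circles),
and distinct values of `κ` give circles of distinct radii. -/
theorem stmt_11 (E : ℝ → ℝ) (l n : ℝ × ℝ → E4)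
    (hE : ContDiff ℝ (⊤ : ℕ∞) E) (hEpos : ∀ u, 0 < E u)
    (hl : ContDiff ℝ (⊤ : ℕ∞) l) (hn : ContDiff ℝ (⊤ : ℕ∞) n)
    (hunit : ∀ p, ⟪l p, l p⟫_ℝ = 1)
    (hEu : ∀ p : ℝ × ℝ, ⟪pu l p, pu l p⟫_ℝ = E p.1)
    (hEv : ∀ p : ℝ × ℝ, ⟪pv l p, pv l p⟫_ℝ = E p.1)
    (hF : ∀ p, ⟪pu l p, pv l p⟫_ℝ = 0)
    (hn1 : ∀ p, ⟪n p, n p⟫_ℝ = 1)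
    (hnl : ∀ p, ⟪n p, l p⟫_ℝ = 0)
    (hnu : ∀ p, ⟪n p, pu l p⟫_ℝ = 0)
    (hnv : ∀ p, ⟪n p, pv l p⟫_ℝ = 0)
    (huu : ∀ p : ℝ × ℝ, pu (pu l) p =
      (deriv E p.1 / (2 * E p.1)) • pu l p - E p.1 • l p + n p)
    (huv : ∀ p : ℝ × ℝ, pv (pu l) p =
      (deriv E p.1 / (2 * E p.1)) • pv l p)
    (hvv : ∀ p : ℝ × ℝ, pv (pv l) p =
      -((deriv E p.1 / (2 * E p.1)) • pu l p) - E p.1 • l p - n p)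
    (hnu' : ∀ p : ℝ × ℝ, pu n p = -((1 / E p.1) • pu l p))
    (hnv' : ∀ p : ℝ × ℝ, pv n p = (1 / E p.1) • pv l p) :
    (∀ u₀ : ℝ, 1 < kappa E u₀ ∧
      IsCircleOfRadius (fun v => l (u₀, v)) (1 / kappa E u₀)) ∧
    ∀ u₀ u₁ : ℝ, kappa E u₀ ≠ kappa E u₁ → 1 / kappa E u₀ ≠ 1 / kappa E u₁ := by
  have hld : Differentiable ℝ l := hl.differentiable (by simp)
  have hnd : Differentiable ℝ n := hn.differentiable (by simp)
  have hpvld : Differentiable ℝ (pv l) :=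
    (contDiff_pv l hl).differentiable (by simp)
  have hpuld : Differentiable ℝ (pu l) :=
    (contDiff_pu l hl).differentiable (by simp)
  have hlv : ∀ p, ⟪l p, pv l p⟫_ℝ = 0 := fun p => inner_pd_zero l hld 1 hunit p (0,1)
  have hlu : ∀ p, ⟪l p, pu l p⟫_ℝ = 0 := fun p => inner_pd_zero l hld 1 hunit p (1,0)
  have hk1 : ∀ u₀, 1 < kappa E u₀ := by
    intro u₀
    have he0 := hEpos u₀
    have h1 : (1:ℝ) < 1 + (deriv E u₀) ^ 2 / (4 * (E u₀) ^ 3) + 1 / (E u₀) ^ 2 := by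
      have h2 : (0:ℝ) ≤ (deriv E u₀) ^ 2 / (4 * (E u₀) ^ 3) := by positivity
      have h3 : (0:ℝ) < 1 / (E u₀) ^ 2 := by positivity
      linarith
    unfold kappa
    rw [Real.lt_sqrt (by norm_num)]
    simpa using h1
  constructor
  · intro u₀
    refine ⟨hk1 u₀, ?_⟩
    have he0 : (0:ℝ) < E u₀ := hEpos u₀
    set e : ℝ := E u₀ with he
    set h : ℝ := deriv E u₀ / (2 * e) with hh
    set k : ℝ := kappa E u₀ with hkdef
    have hk0 : 0 < k := lt_trans one_pos (hk1 u₀)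
    have harg : (0:ℝ) ≤ 1 + (deriv E u₀) ^ 2 / (4 * e ^ 3) + 1 / e ^ 2 := by positivity
    have hk2 : k ^ 2 = 1 + h ^ 2 / e + 1 / e ^ 2 := by
      rw [hkdef, kappa, ← he, sq_sqrt harg, hh]
      field_simp
      ring
    have hek2 : e * k ^ 2 = e + h ^ 2 + 1 / e := by
      rw [hk2]; field_simp
    -- curves
    set L : ℝ → E4 := fun v => l (u₀, v) with hLdef
    set Lu : ℝ → E4 := fun v => pu l (u₀, v) with hLudef
    set Lv : ℝ → E4 := fun v => pv l (u₀, v) with hLvdef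
    set N : ℝ → E4 := fun v => n (u₀, v) with hNdef
    have dL : ∀ v, HasDerivAt L (Lv v) v := fun v => hasDerivAt_sec l hld u₀ v
    have dLu : ∀ v, HasDerivAt Lu (h • Lv v) v := by
      intro v
      have h1 := hasDerivAt_sec (pu l) hpuld u₀ v
      rw [huv (u₀, v)] at h1
      exact h1
    have dLv : ∀ v, HasDerivAt Lv (-(h • Lu v) - e • L v - N v) v := by
      intro v
      have h1 := hasDerivAt_sec (pv l) hpvld u₀ v
      rw [hvv (u₀, v)] at h1
      exact h1
    have dN : ∀ v, HasDerivAt N ((1/e) • Lv v) v := by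
      intro v
      have h1 := hasDerivAt_sec n hnd u₀ v
      rw [hnv' (u₀, v)] at h1
      exact h1
    -- constants
    set β : ℝ := -1 / (e * k ^ 2) with hβ
    set α : ℝ := h * β with hα
    set γ : ℝ := 1 + e * β with hγ
    have hden : (0:ℝ) < e + h ^ 2 + 1 / e := by positivity
    have hcoef : γ + α * h + β * (1 / e) = 0 := by
      rw [hγ, hα, hβ, hek2]
      field_simp
      ring
    set P : ℝ → E4 := fun v => γ • L v + α • Lu v + β • N v with hPdef
    have dP : ∀ v, HasDerivAt P (0 : E4) v := by
      intro v
      have h1 := (((dL v).const_smul γ).add ((dLu v).const_smul α)).add ((dN v).const_smul β)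
      have h2 : γ • Lv v + α • (h • Lv v) + β • ((1/e) • Lv v)
          = (γ + α * h + β * (1/e)) • Lv v := by module
      rw [h2, hcoef, zero_smul] at h1
      exact h1
    have hPc : ∀ v, P v = P 0 := fun v =>
      is_const_of_deriv_eq_zero (fun t => (dP t).differentiableAt) (fun t => (dP t).deriv) v 0
    set p₀ : E4 := P 0 with hp₀
    set w : ℝ → E4 := fun v => (1 - γ) • L v - α • Lu v - β • N v with hwdef
    have hw : ∀ v, L v - p₀ = w v := by
      intro v
      rw [← hPc v]
      simp only [hPdef, hwdef]
      module
    have dw : ∀ v, HasDerivAt w (Lv v) v := by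
      intro v
      have h1 := (((dL v).const_smul (1-γ)).sub ((dLu v).const_smul α)).sub ((dN v).const_smul β)
      have h2 : (1-γ) • Lv v - α • (h • Lv v) - β • ((1/e) • Lv v)
          = (1 - (γ + α * h + β * (1/e))) • Lv v := by module
      rw [h2, hcoef, sub_zero, one_smul] at h1
      exact h1
    set ω : ℝ := Real.sqrt (e * k ^ 2) with hω
    have hω0 : 0 < ω := Real.sqrt_pos.mpr (by positivity)
    have hω2 : ω ^ 2 = e * k ^ 2 := Real.sq_sqrt (by positivity)
    have hLveq : ∀ v, -(h • Lu v) - e • L v - N v = (-(ω^2)) • w v := by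
      intro v
      rw [hω2]
      simp only [hwdef]
      match_scalars <;> (simp only [hγ, hα, hβ]; field_simp; try ring)
    have dLv' : ∀ v, HasDerivAt Lv ((-(ω^2)) • w v) v := by
      intro v
      have h1 := dLv v
      rw [hLveq v] at h1
      exact h1
    -- solve the ODE
    set w0 : E4 := w 0 with hw0def
    set z0 : E4 := Lv 0 with hz0def
    set U : ℝ → E4 := fun v => w v - Real.cos (ω*v) • w0 - (Real.sin (ω*v)/ω) • z0 with hUdef
    set V : ℝ → E4 := fun v => Lv v + (ω * Real.sin (ω*v)) • w0 - Real.cos (ω*v) • z0 with hVdef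
    have dcos : ∀ v, HasDerivAt (fun t => Real.cos (ω*t)) (-Real.sin (ω*v) * (ω*1)) v := by
      intro v
      exact (Real.hasDerivAt_cos (ω*v)).comp v ((hasDerivAt_id v).const_mul ω)
    have dsin : ∀ v, HasDerivAt (fun t => Real.sin (ω*t)) (Real.cos (ω*v) * (ω*1)) v := by
      intro v
      exact (Real.hasDerivAt_sin (ω*v)).comp v ((hasDerivAt_id v).const_mul ω)
    have dU : ∀ v, HasDerivAt U (V v) v := by
      intro v
      have h1 := ((dw v).sub ((dcos v).smul_const w0)).sub
        (((dsin v).div_const ω).smul_const z0)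
      refine h1.congr_deriv ?_
      simp only [hVdef]
      match_scalars <;> (field_simp; try ring) <;> try tauto
    have dV : ∀ v, HasDerivAt V ((-(ω^2)) • U v) v := by
      intro v
      have h1 := ((dLv' v).add (((dsin v).const_mul ω).smul_const w0)).sub
        ((dcos v).smul_const z0)
      refine h1.congr_deriv ?_
      simp only [hUdef]
      match_scalars <;> (field_simp; try ring) <;> try tauto
    have hU0 : U 0 = 0 := by
      simp [hUdef, hw0def]
    have hV0 : V 0 = 0 := by
      simp [hVdef, hz0def]
    set H : ℝ → ℝ := fun v => ⟪V v, V v⟫_ℝ + ω^2 * ⟪U v, U v⟫_ℝ with hHdef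
    have dH : ∀ v, HasDerivAt H 0 v := by
      intro v
      have h1 := ((dV v).inner ℝ (dV v)).add (((dU v).inner ℝ (dU v)).const_mul (ω^2))
      refine h1.congr_deriv ?_
      simp only [real_inner_smul_left, real_inner_smul_right,
        real_inner_comm (U v) (V v)]
      ring
    have hHc : ∀ v, H v = 0 := by
      intro v
      have h1 := is_const_of_deriv_eq_zero (f := H)
        (fun t => (dH t).differentiableAt) (fun t => (dH t).deriv) v 0
      rw [h1, hHdef]
      simp [hU0, hV0]
    have hUzero : ∀ v, U v = 0 := by
      intro v
      have h1 := hHc v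
      have h2 : (0:ℝ) ≤ ⟪V v, V v⟫_ℝ := real_inner_self_nonneg
      have h3 : (0:ℝ) ≤ ⟪U v, U v⟫_ℝ := real_inner_self_nonneg
      have h4 : ⟪U v, U v⟫_ℝ = 0 := by
        rw [hHdef] at h1
        simp only at h1
        nlinarith [sq_nonneg ω]
      exact inner_self_eq_zero.mp h4
    have hwv : ∀ v, w v = Real.cos (ω*v) • w0 + (Real.sin (ω*v)/ω) • z0 := by
      intro v
      have h1 := hUzero v
      rw [hUdef] at h1
      simp only at h1
      have h2 : w v - (Real.cos (ω*v) • w0 + (Real.sin (ω*v)/ω) • z0)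
          = w v - Real.cos (ω*v) • w0 - (Real.sin (ω*v)/ω) • z0 := by module
      exact sub_eq_zero.mp (h2.trans h1)
    -- inner product computations
    have iww : ∀ v, ⟪w v, w v⟫_ℝ = 1 / k ^ 2 := by
      intro v
      have e1 : ⟪L v, L v⟫_ℝ = 1 := hunit (u₀, v)
      have e2 : ⟪Lu v, Lu v⟫_ℝ = e := by rw [he]; exact hEu (u₀, v)
      have e3 : ⟪N v, N v⟫_ℝ = 1 := hn1 (u₀, v)
      have e4 : ⟪L v, Lu v⟫_ℝ = 0 := hlu (u₀, v)
      have e5 : ⟪Lu v, L v⟫_ℝ = 0 := by rw [real_inner_comm]; exact e4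
      have e6 : ⟪N v, L v⟫_ℝ = 0 := hnl (u₀, v)
      have e7 : ⟪L v, N v⟫_ℝ = 0 := by rw [real_inner_comm]; exact e6
      have e8 : ⟪N v, Lu v⟫_ℝ = 0 := hnu (u₀, v)
      have e9 : ⟪Lu v, N v⟫_ℝ = 0 := by rw [real_inner_comm]; exact e8
      have h1 : ⟪w v, w v⟫_ℝ = (1-γ)^2 + α^2*e + β^2 := by
        simp only [hwdef]
        exact inner_exp (L v) (Lu v) (N v) (1-γ) α β e e1 e2 e3 e4 e7 e9
      rw [h1]
      exact scalar1 e h k β α γ (ne_of_gt he0) (ne_of_gt hk0) hβ hα hγ hek2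
    have iwz : ∀ v, ⟪w v, Lv v⟫_ℝ = 0 := by
      intro v
      have e1 : ⟪L v, Lv v⟫_ℝ = 0 := hlv (u₀, v)
      have e2 : ⟪Lu v, Lv v⟫_ℝ = 0 := hF (u₀, v)
      have e3 : ⟪N v, Lv v⟫_ℝ = 0 := hnv (u₀, v)
      simp only [hwdef]
      exact inner_exp2 (L v) (Lu v) (N v) (Lv v) (1-γ) α β e1 e2 e3
    have izz : ⟪z0, z0⟫_ℝ = e := by rw [hz0def, he]; exact hEv (u₀, 0)
    have iw0 : ⟪w0, w0⟫_ℝ = 1 / k ^ 2 := by rw [hw0def]; exact iww 0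
    have iwz0 : ⟪w0, z0⟫_ℝ = 0 := by rw [hw0def, hz0def]; exact iwz 0
    have izw0 : ⟪z0, w0⟫_ℝ = 0 := by rw [real_inner_comm]; exact iwz0
    -- linear independence and span
    have hlin : LinearIndependent ℝ ![w0, z0] := by
      rw [LinearIndependent.pair_iff]
      intro s t hst
      have h1 : ⟪s • w0 + t • z0, w0⟫_ℝ = 0 := by rw [hst]; simp
      have h2 : ⟪s • w0 + t • z0, z0⟫_ℝ = 0 := by rw [hst]; simp
      rw [inner_add_left, real_inner_smul_left, real_inner_smul_left, iw0, izw0] at h1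
      rw [inner_add_left, real_inner_smul_left, real_inner_smul_left, iwz0, izz] at h2
      constructor
      · have : s * (1 / k ^ 2) = 0 := by linarith
        have hknz : (1:ℝ) / k ^ 2 ≠ 0 := by positivity
        exact (mul_eq_zero.mp this).resolve_right hknz
      · have : t * e = 0 := by linarith
        exact (mul_eq_zero.mp this).resolve_right (ne_of_gt he0)
    set S : Submodule ℝ E4 := Submodule.span ℝ (Set.range ![w0, z0]) with hS
    have hfin : Module.finrank ℝ S = 2 := by
      rw [hS, finrank_span_eq_card hlin]
      simp
    have hmem : ∀ v, w v ∈ S := by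
      intro v
      rw [hwv v, hS]
      exact Submodule.add_mem _
        (Submodule.smul_mem _ _ (Submodule.subset_span ⟨0, rfl⟩))
        (Submodule.smul_mem _ _ (Submodule.subset_span ⟨1, rfl⟩))
    have hnorm : ∀ v, ‖L v - p₀‖ = 1 / k := by
      intro v
      have h1 : ‖L v - p₀‖ ^ 2 = (1/k) ^ 2 := by
        rw [← real_inner_self_eq_norm_sq, hw v, iww v]
        ring
      calc ‖L v - p₀‖ = Real.sqrt (‖L v - p₀‖ ^ 2) := (Real.sqrt_sq (norm_nonneg _)).symm
        _ = Real.sqrt ((1/k) ^ 2) := by rw [h1]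
        _ = 1 / k := Real.sqrt_sq (by positivity)
    refine ⟨AffineSubspace.mk' p₀ S, p₀, ?_, ?_⟩
    · rw [AffineSubspace.direction_mk']
      exact hfin
    · intro t
      refine ⟨?_, hnorm t⟩
      rw [AffineSubspace.mem_mk']
      show L t -ᵥ p₀ ∈ S
      rw [vsub_eq_sub, hw t]
      exact hmem t
  · intro u₀ u₁ hne heq
    apply hne
    have h0 : 0 < kappa E u₀ := lt_trans one_pos (hk1 u₀)
    have h1 : 0 < kappa E u₁ := lt_trans one_pos (hk1 u₁)
    field_simp at heq
    linarith
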